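/- Assume the action-density-bounded dual LP is feasible. Let (d*, p*) be an optimal solution of the action-density-bounded dual LP with derived policy π*(a|s) = p*(s,a)/d*(s), and let (v*, q*, r_lb*, r_ub*) be an optimal solution of the action-density-bounded primal LP. Then r_lb*(s,a) = 0 for every (s,a) with π_lb(a|s) < π*(a|s), and r_ub*(s,a) = 0 for every (s,a) with π*(a|s) < π_ub(a|s); that is, the optimal modified reward is only altered at tight action density bounds. -/

import Mathlib

open Finset

section MDPDefs

variable {S A : Type*}

/-- A (stationary, stochastic) policy on finite state/action spaces. -/
def IsPolicy [Fintype A] (π : S → A → ℝ) : Prop :=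
  (∀ s a, 0 ≤ π s a) ∧ ∀ s, ∑ a, π s a = 1

/-- `d` is the (discounted) state visitation density of the policy `π`:
it satisfies `d(s) = (1-γ)ι(s) + γ Σ_{s',a'} d(s') π(a'|s') τ(s|s',a')`. -/
def IsVisit [Fintype S] [Fintype A] (ι : S → ℝ) (τ : S → A → S → ℝ) (γ : ℝ)
    (π : S → A → ℝ) (d : S → ℝ) : Prop :=
  ∀ s, d s = (1 - γ) * ι s + γ * ∑ s', ∑ a', d s' * π s' a' * τ s' a' s

/-- Feasibility for the value-learning dual LP. -/
def DualFeas [Fintype S] [Fintype A] (ι : S → ℝ) (τ : S → A → S → ℝ) (γ : ℝ)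
    (d : S → ℝ) (p : S → A → ℝ) : Prop :=
  (∀ s, ∑ a, p s a = d s) ∧
  (∀ s, d s = (1 - γ) * ι s + γ * ∑ s', ∑ a', p s' a' * τ s' a' s) ∧
  ∀ s a, 0 ≤ p s a

/-- The dual objective: the average reward under the state-action density `p`,
`Σ_{s,a} p(s,a) Σ_{s'} τ(s'|s,a) r(s,a,s')`. -/
def DualObj [Fintype S] [Fintype A] (τ : S → A → S → ℝ) (r : S → A → S → ℝ)
    (p : S → A → ℝ) : ℝ :=
  ∑ s, ∑ a, p s a * ∑ s', τ s a s' * r s a s'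

/-- The standing MDP assumptions: `ι` is an everywhere-positive initial-state
distribution, `τ(·|s,a)` are transition probabilities and `γ ∈ [0,1)`. -/
def IsMDP [Fintype S] [Fintype A] (ι : S → ℝ) (τ : S → A → S → ℝ) (γ : ℝ) : Prop :=
  (∀ s, 0 < ι s) ∧ (∑ s, ι s = 1) ∧
  (∀ s a s', 0 ≤ τ s a s') ∧ (∀ s a, ∑ s', τ s a s' = 1) ∧
  0 ≤ γ ∧ γ < 1

end MDPDefs

set_option linter.unusedSectionVars false

section HelperLemmas

lemma expand_row {S : Type*} [Fintype S] (τ : S → ℝ) (hτ1 : ∑ s', τ s' = 1)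
    (ρ v : S → ℝ) (c γ : ℝ) :
    ∑ s', τ s' * (ρ s' + c + γ * v s') = (∑ s', τ s' * ρ s') + c + γ * ∑ s', τ s' * v s' := by
  have h : ∀ s', τ s' * (ρ s' + c + γ * v s') = τ s' * ρ s' + τ s' * c + γ * (τ s' * v s') :=
    fun s' => by ring
  rw [Finset.sum_congr rfl fun s' _ => h s', Finset.sum_add_distrib, Finset.sum_add_distrib,
    ← Finset.sum_mul, hτ1, one_mul, ← Finset.mul_sum]

end HelperLemmas

section MainProof
variable {S A : Type*} [Fintype S] [Fintype A]

lemma triple_comm' (X : S → A → S → ℝ) :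
    ∑ s, ∑ a, ∑ s', X s a s' = ∑ s', ∑ s, ∑ a, X s a s' := by
  calc ∑ s, ∑ a, ∑ s', X s a s' = ∑ s, ∑ s', ∑ a, X s a s' :=
        Finset.sum_congr rfl fun s _ => Finset.sum_comm
    _ = ∑ s', ∑ s, ∑ a, X s a s' := Finset.sum_comm

lemma flow_identity' (τ : S → A → S → ℝ) (ι : S → ℝ) (γ : ℝ) (d : S → ℝ) (p : S → A → ℝ)
    (hsum : ∀ s, ∑ a, p s a = d s)
    (hflow : ∀ s, d s = (1 - γ) * ι s + γ * ∑ s', ∑ a', p s' a' * τ s' a' s)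
    (v : S → ℝ) (g : S → A → ℝ) :
    ∑ s, ∑ a, p s a * (g s a + γ * ∑ s', τ s a s' * v s' - v s)
      = (∑ s, ∑ a, p s a * g s a) - (1 - γ) * ∑ s, ι s * v s := by
  have hB : ∑ s, ∑ a, ∑ s', p s a * (γ * (τ s a s' * v s'))
      = ∑ s', (d s' - (1 - γ) * ι s') * v s' := by
    rw [triple_comm']
    refine Finset.sum_congr rfl fun s' _ => ?_
    have h1 : ∑ s, ∑ a, p s a * (γ * (τ s a s' * v s'))
        = (γ * ∑ s, ∑ a, p s a * τ s a s') * v s' := by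
      rw [Finset.mul_sum, Finset.sum_mul]
      refine Finset.sum_congr rfl fun s _ => ?_
      rw [Finset.mul_sum, Finset.sum_mul]
      exact Finset.sum_congr rfl fun a _ => by ring
    rw [h1]
    have h2 : γ * ∑ s, ∑ a, p s a * τ s a s' = d s' - (1 - γ) * ι s' := by
      have := hflow s'
      linarith
    rw [h2]
  have hC : ∑ s, ∑ a, p s a * v s = ∑ s, d s * v s := by
    refine Finset.sum_congr rfl fun s _ => ?_
    rw [← Finset.sum_mul, hsum]
  have hexp : ∑ s, ∑ a, p s a * (g s a + γ * ∑ s', τ s a s' * v s' - v s)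
      = (∑ s, ∑ a, p s a * g s a)
        + (∑ s, ∑ a, ∑ s', p s a * (γ * (τ s a s' * v s')))
        - ∑ s, ∑ a, p s a * v s := by
    rw [← Finset.sum_add_distrib, ← Finset.sum_sub_distrib]
    refine Finset.sum_congr rfl fun s _ => ?_
    rw [← Finset.sum_add_distrib, ← Finset.sum_sub_distrib]
    refine Finset.sum_congr rfl fun a _ => ?_
    have h3 : ∑ s', p s a * (γ * (τ s a s' * v s')) = p s a * (γ * ∑ s', τ s a s' * v s') := by
      rw [Finset.mul_sum, Finset.mul_sum]
    rw [h3]; ring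
  rw [hexp, hB, hC]
  have : ∑ s', (d s' - (1 - γ) * ι s') * v s'
      = (∑ s, d s * v s) - (1 - γ) * ∑ s, ι s * v s := by
    rw [Finset.mul_sum, ← Finset.sum_sub_distrib]
    exact Finset.sum_congr rfl fun s _ => by ring
  rw [this]; ring

lemma exists_value_fp' (π : S → A → ℝ) (hπ0 : ∀ s a, 0 ≤ π s a)
    (hπ1 : ∀ s, ∑ a, π s a = 1) (τ : S → A → S → ℝ) (hτ0 : ∀ s a s', 0 ≤ τ s a s')
    (hτ1 : ∀ s a, ∑ s', τ s a s' = 1) (R : S → A → ℝ) (γ : ℝ) (hγ0 : 0 ≤ γ) (hγ1 : γ < 1) :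
    ∃ v : S → ℝ, ∀ s, v s = ∑ a, π s a * (R s a + γ * ∑ s', τ s a s' * v s') := by
  set T : (S → ℝ) → (S → ℝ) :=
    fun v s => ∑ a, π s a * (R s a + γ * ∑ s', τ s a s' * v s') with hT
  have hK : (⟨γ, hγ0⟩ : NNReal) < 1 := by
    exact hγ1
  have hLip : LipschitzWith ⟨γ, hγ0⟩ T := by
    apply LipschitzWith.of_dist_le_mul
    intro v w
    rw [dist_pi_le_iff (by positivity)]
    intro s
    rw [Real.dist_eq]
    have h1 : T v s - T w s = ∑ a, π s a * (γ * ∑ s', τ s a s' * (v s' - w s')) := by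
      simp only [hT]
      rw [← Finset.sum_sub_distrib]
      refine Finset.sum_congr rfl fun a _ => ?_
      have h2 : ∑ s', τ s a s' * (v s' - w s')
          = (∑ s', τ s a s' * v s') - ∑ s', τ s a s' * w s' := by
        rw [← Finset.sum_sub_distrib]
        exact Finset.sum_congr rfl fun s' _ => by ring
      rw [h2]; ring
    rw [h1]
    calc |∑ a, π s a * (γ * ∑ s', τ s a s' * (v s' - w s'))|
        ≤ ∑ a, |π s a * (γ * ∑ s', τ s a s' * (v s' - w s'))| := Finset.abs_sum_le_sum_abs _ _
      _ ≤ ∑ a, π s a * (γ * dist v w) := by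
          refine Finset.sum_le_sum fun a _ => ?_
          rw [abs_mul, abs_of_nonneg (hπ0 s a)]
          refine mul_le_mul_of_nonneg_left ?_ (hπ0 s a)
          rw [abs_mul, abs_of_nonneg hγ0]
          refine mul_le_mul_of_nonneg_left ?_ hγ0
          calc |∑ s', τ s a s' * (v s' - w s')| ≤ ∑ s', |τ s a s' * (v s' - w s')| :=
                Finset.abs_sum_le_sum_abs _ _
            _ ≤ ∑ s', τ s a s' * dist v w := by
                refine Finset.sum_le_sum fun s' _ => ?_
                rw [abs_mul, abs_of_nonneg (hτ0 s a s')]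
                refine mul_le_mul_of_nonneg_left ?_ (hτ0 s a s')
                rw [← Real.dist_eq]
                exact dist_le_pi_dist v w s'
            _ = dist v w := by rw [← Finset.sum_mul, hτ1, one_mul]
      _ = γ * dist v w := by rw [← Finset.sum_mul, hπ1, one_mul]
  have hC : ContractingWith ⟨γ, hγ0⟩ T := ⟨hK, hLip⟩
  refine ⟨ContractingWith.fixedPoint T hC, fun s => ?_⟩
  conv_lhs => rw [← hC.fixedPoint_isFixedPt]

lemma exists_visit_nonneg' (π : S → A → ℝ) (hπ0 : ∀ s a, 0 ≤ π s a)
    (hπ1 : ∀ s, ∑ a, π s a = 1) (τ : S → A → S → ℝ) (hτ0 : ∀ s a s', 0 ≤ τ s a s')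
    (hτ1 : ∀ s a, ∑ s', τ s a s' = 1) (ι : S → ℝ) (hι : ∀ s, 0 ≤ ι s)
    (γ : ℝ) (hγ0 : 0 ≤ γ) (hγ1 : γ < 1) :
    ∃ d : S → ℝ, (∀ s, 0 ≤ d s) ∧
      ∀ s, d s = (1 - γ) * ι s + γ * ∑ s', ∑ a', d s' * π s' a' * τ s' a' s := by
  set E := PiLp 1 (fun _ : S => ℝ) with hE
  set F : E → E :=
    fun d => WithLp.toLp 1 (fun s => (1 - γ) * ι s + γ * ∑ s', ∑ a', d s' * π s' a' * τ s' a' s) with hF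
  have hK : (⟨γ, hγ0⟩ : NNReal) < 1 := by
    exact hγ1
  have hdist : ∀ x y : E, dist x y = ∑ s, dist (x s) (y s) := by
    intro x y
    rw [PiLp.dist_eq_sum (p := 1) (by norm_num)]
    simp
  have hLip : LipschitzWith ⟨γ, hγ0⟩ F := by
    apply LipschitzWith.of_dist_le_mul
    intro x y
    rw [hdist, hdist]
    have key : ∀ s, dist (F x s) (F y s)
        ≤ γ * ∑ s', ∑ a', dist (x s') (y s') * (π s' a' * τ s' a' s) := by
      intro s
      rw [Real.dist_eq]
      have : F x s - F y s = γ * ∑ s', ∑ a', (x s' - y s') * (π s' a' * τ s' a' s) := by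
        simp only [hF]
        have h2 : ∑ s', ∑ a', (x s' - y s') * (π s' a' * τ s' a' s)
            = (∑ s', ∑ a', x s' * π s' a' * τ s' a' s)
              - ∑ s', ∑ a', y s' * π s' a' * τ s' a' s := by
          rw [← Finset.sum_sub_distrib]
          refine Finset.sum_congr rfl fun s' _ => ?_
          rw [← Finset.sum_sub_distrib]
          exact Finset.sum_congr rfl fun a' _ => by ring
        rw [h2]; ring
      rw [this, abs_mul, abs_of_nonneg hγ0]
      refine mul_le_mul_of_nonneg_left ?_ hγ0
      calc |∑ s', ∑ a', (x s' - y s') * (π s' a' * τ s' a' s)|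
          ≤ ∑ s', |∑ a', (x s' - y s') * (π s' a' * τ s' a' s)| :=
            Finset.abs_sum_le_sum_abs _ _
        _ ≤ ∑ s', ∑ a', |(x s' - y s') * (π s' a' * τ s' a' s)| :=
            Finset.sum_le_sum fun s' _ => Finset.abs_sum_le_sum_abs _ _
        _ ≤ ∑ s', ∑ a', dist (x s') (y s') * (π s' a' * τ s' a' s) := by
            refine Finset.sum_le_sum fun s' _ => Finset.sum_le_sum fun a' _ => ?_
            rw [abs_mul, Real.dist_eq]
            refine mul_le_mul_of_nonneg_left ?_ (abs_nonneg _)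
            rw [abs_of_nonneg (mul_nonneg (hπ0 s' a') (hτ0 s' a' s))]
    calc ∑ s, dist (F x s) (F y s)
        ≤ ∑ s, γ * ∑ s', ∑ a', dist (x s') (y s') * (π s' a' * τ s' a' s) :=
          Finset.sum_le_sum fun s _ => key s
      _ = γ * ∑ s', dist (x s') (y s') * ∑ a', π s' a' * ∑ s, τ s' a' s := by
          rw [← Finset.mul_sum, Finset.sum_comm]
          congr 1
          refine Finset.sum_congr rfl fun s' _ => ?_
          rw [Finset.mul_sum, Finset.sum_comm]
          refine Finset.sum_congr rfl fun a' _ => ?_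
          rw [Finset.mul_sum, Finset.mul_sum]
      _ = γ * ∑ s', dist (x s') (y s') := by
          congr 1
          refine Finset.sum_congr rfl fun s' _ => ?_
          have : ∑ a', π s' a' * ∑ s, τ s' a' s = 1 := by
            rw [← hπ1 s']
            exact Finset.sum_congr rfl fun a' _ => by rw [hτ1, mul_one]
          rw [this, mul_one]
      _ ≤ ↑(⟨γ, hγ0⟩ : NNReal) * ∑ s', dist (x s') (y s') := le_refl _
  have hCon : ContractingWith ⟨γ, hγ0⟩ F := ⟨hK, hLip⟩
  set s0 : Set E := {d : E | ∀ s, 0 ≤ d s} with hs0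
  have hclosed : IsClosed s0 := by
    have : s0 = ⋂ s : S, {d : E | 0 ≤ d s} := by
      ext d; simp [hs0, Set.mem_iInter]
    rw [this]
    refine isClosed_iInter fun s => ?_
    have hcont : Continuous fun d : E => d s :=
      (continuous_apply s).comp (PiLp.continuous_ofLp 1 (fun _ : S => ℝ))
    exact isClosed_le continuous_const hcont
  have hmaps : Set.MapsTo F s0 s0 := by
    intro d hd s
    simp only [hF]
    have h1 : 0 ≤ (1 - γ) * ι s := mul_nonneg (by linarith) (hι s)
    have h2 : 0 ≤ ∑ s', ∑ a', d s' * π s' a' * τ s' a' s := by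
      refine Finset.sum_nonneg fun s' _ => Finset.sum_nonneg fun a' _ => ?_
      exact mul_nonneg (mul_nonneg (hd s') (hπ0 s' a')) (hτ0 s' a' s)
    exact add_nonneg h1 (mul_nonneg hγ0 h2)
  have hCr : ContractingWith ⟨γ, hγ0⟩ (hmaps.restrict F s0 s0) := by
    refine ⟨hK, fun x y => ?_⟩
    exact hLip x.1 y.1
  have h0 : (0 : E) ∈ s0 := fun s => le_refl 0
  obtain ⟨y, hy, hfix, -, -⟩ :=
    ContractingWith.exists_fixedPoint' hclosed.isComplete hmaps hCr h0 (edist_ne_top _ _)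
  exact ⟨y, hy, fun s => by conv_lhs => rw [← hfix]⟩

end MainProof

/-- given optimal solutions of the (feasible) action-density-bounded dual
and primal LPs, the optimal reward modifications vanish at non-tight action density
bounds: `r_lb*(s,a) = 0` wherever `π_lb(a|s) < π*(a|s)` and `r_ub*(s,a) = 0` wherever
`π*(a|s) < π_ub(a|s)`, with `π* = p*/d*`. -/
theorem adb_reward_modifications_tight_only
    {S A : Type*} [Fintype S] [Fintype A] [Nonempty S] [Nonempty A]
    (ι : S → ℝ) (τ : S → A → S → ℝ) (γ : ℝ) (r : S → A → S → ℝ)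
    (hMDP : IsMDP ι τ γ)
    (πlb πub : S → A → ℝ) (hlb0 : ∀ s a, 0 ≤ πlb s a)
    (hlb1 : ∀ s, ∑ a, πlb s a ≤ 1) (hub1 : ∀ s, 1 ≤ ∑ a, πub s a)
    (dStar : S → ℝ) (pStar : S → A → ℝ)
    (hDFeas : DualFeas ι τ γ dStar pStar ∧
      ∀ s a, dStar s * πlb s a ≤ pStar s a ∧ pStar s a ≤ dStar s * πub s a)
    (hDOpt : ∀ (d : S → ℝ) (p : S → A → ℝ),
      (DualFeas ι τ γ d p ∧
        ∀ s a, d s * πlb s a ≤ p s a ∧ p s a ≤ d s * πub s a) →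
      DualObj τ r p ≤ DualObj τ r pStar)
    (vStar : S → ℝ) (qStar rlbStar rubStar : S → A → ℝ)
    (hPFeas : (∀ s a, qStar s a ≤ vStar s) ∧
      (∀ s a, qStar s a = ∑ s', τ s a s' *
        (r s a s' + rlbStar s a - (∑ b, rlbStar s b * πlb s b) -
          rubStar s a + (∑ b, rubStar s b * πub s b) + γ * vStar s')) ∧
      (∀ s a, 0 ≤ rlbStar s a) ∧ ∀ s a, 0 ≤ rubStar s a)
    (hPOpt : ∀ (v : S → ℝ) (q rlb rub : S → A → ℝ),
      ((∀ s a, q s a ≤ v s) ∧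
        (∀ s a, q s a = ∑ s', τ s a s' *
          (r s a s' + rlb s a - (∑ b, rlb s b * πlb s b) -
            rub s a + (∑ b, rub s b * πub s b) + γ * v s')) ∧
        (∀ s a, 0 ≤ rlb s a) ∧ ∀ s a, 0 ≤ rub s a) →
      ∑ s, ι s * ((1 - γ) * vStar s) ≤ ∑ s, ι s * ((1 - γ) * v s)) :
    (∀ s a, πlb s a < pStar s a / dStar s → rlbStar s a = 0) ∧
    (∀ s a, pStar s a / dStar s < πub s a → rubStar s a = 0) := by
  classical
  obtain ⟨hι, hι1, hτ0, hτ1, hγ0, hγ1⟩ := hMDP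
  obtain ⟨⟨hpsum, hpflow, hp0⟩, hbounds⟩ := hDFeas
  obtain ⟨hqv, hqeq, hrlbS0, hrubS0⟩ := hPFeas
  -- positivity of dStar
  have hd0 : ∀ s, 0 < dStar s := by
    intro s
    rw [hpflow s]
    have h2 : 0 ≤ ∑ s', ∑ a', pStar s' a' * τ s' a' s :=
      Finset.sum_nonneg fun s' _ => Finset.sum_nonneg fun a' _ =>
        mul_nonneg (hp0 s' a') (hτ0 s' a' s)
    have h3 : 0 < (1 - γ) * ι s := mul_pos (by linarith) (hι s)
    nlinarith [mul_nonneg hγ0 h2]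
  set piS : S → A → ℝ := fun s a => pStar s a / dStar s with hpiSdef
  have hpd : ∀ s a, pStar s a = dStar s * piS s a := by
    intro s a
    simp only [hpiSdef]
    rw [mul_comm (dStar s), div_mul_cancel₀ _ (hd0 s).ne']
  have hpiS0 : ∀ s a, 0 ≤ piS s a := fun s a => div_nonneg (hp0 s a) (hd0 s).le
  have hpiS1 : ∀ s, ∑ a, piS s a = 1 := by
    intro s
    simp only [hpiSdef]
    rw [← Finset.sum_div, hpsum, div_self (hd0 s).ne']
  have hpiSlb : ∀ s a, πlb s a ≤ piS s a := by
    intro s a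
    rw [hpiSdef, le_div_iff₀ (hd0 s)]
    calc πlb s a * dStar s = dStar s * πlb s a := by ring
      _ ≤ pStar s a := (hbounds s a).1
  have hpiSub : ∀ s a, piS s a ≤ πub s a := by
    intro s a
    rw [hpiSdef, div_le_iff₀ (hd0 s)]
    calc pStar s a ≤ dStar s * πub s a := (hbounds s a).2
      _ = πub s a * dStar s := by ring
  set Rb : S → A → ℝ := fun s a => ∑ s', τ s a s' * r s a s' with hRbdef
  obtain ⟨v, hv⟩ := exists_value_fp' piS hpiS0 hpiS1 τ hτ0 hτ1 Rb γ hγ0 hγ1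
  set qh : S → A → ℝ := fun s a => Rb s a + γ * ∑ s', τ s a s' * v s' with hqhdef
  have hvq : ∀ s, v s = ∑ a, piS s a * qh s a := by
    intro s
    conv_lhs => rw [hv s]
  have hDualRb : ∀ p : S → A → ℝ, DualObj τ r p = ∑ s, ∑ a, p s a * Rb s a := by
    intro p
    simp only [DualObj, hRbdef]
  -- I2 : DualObj pStar = (1-γ) ∑ ι v
  have hI2 : DualObj τ r pStar = (1 - γ) * ∑ s, ι s * v s := by
    have hfi := flow_identity' τ ι γ dStar pStar hpsum hpflow v Rb
    have hzero : ∑ s, ∑ a, pStar s a * (Rb s a + γ * ∑ s', τ s a s' * v s' - v s) = 0 := by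
      refine Finset.sum_eq_zero fun s _ => ?_
      have e1 : ∑ a, pStar s a * (Rb s a + γ * ∑ s', τ s a s' * v s' - v s)
          = (∑ a, pStar s a * qh s a) - (∑ a, pStar s a) * v s := by
        rw [Finset.sum_mul, ← Finset.sum_sub_distrib]
        refine Finset.sum_congr rfl fun a _ => ?_
        simp only [hqhdef]; ring
      have e2 : ∑ a, pStar s a * qh s a = dStar s * v s := by
        rw [hvq s, Finset.mul_sum]
        refine Finset.sum_congr rfl fun a _ => ?_
        rw [hpd s a]; ring
      rw [e1, e2, hpsum]; ring
    rw [hzero] at hfi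
    rw [hDualRb]
    linarith
  -- Step C : exchange argument
  have key : ∀ s₀ (a b : A), πlb s₀ a < piS s₀ a → piS s₀ b < πub s₀ b →
      qh s₀ b ≤ qh s₀ a := by
    intro s₀ a b hla hub
    by_contra hab
    push_neg at hab
    have hne : b ≠ a := by
      intro h; rw [h] at hab; exact lt_irrefl _ hab
    set ε : ℝ := min (piS s₀ a - πlb s₀ a) (πub s₀ b - piS s₀ b) with hεdef
    have hε : 0 < ε := lt_min (by linarith) (by linarith)
    have hεa : ε ≤ piS s₀ a - πlb s₀ a := min_le_left _ _
    have hεb : ε ≤ πub s₀ b - piS s₀ b := min_le_right _ _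
    set π' : S → A → ℝ := fun s c =>
      if s = s₀ then piS s c + (if c = b then ε else 0) - (if c = a then ε else 0)
      else piS s c with hπ'def
    have hπ's₀ : ∀ c, π' s₀ c = piS s₀ c + (if c = b then ε else 0) - (if c = a then ε else 0) := by
      intro c; simp only [hπ'def, if_pos rfl]
    have hπ'other : ∀ s, s ≠ s₀ → ∀ c, π' s c = piS s c := by
      intro s hs c; simp only [hπ'def, if_neg hs]
    have hπ'lb : ∀ s c, πlb s c ≤ π' s c := by
      intro s c
      by_cases hs : s = s₀
      · subst hs
        rw [hπ's₀ c]
        by_cases hcb : c = b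
        · subst hcb
          rw [if_pos rfl, if_neg hne]
          have := hpiSlb s c
          linarith
        · rw [if_neg hcb]
          by_cases hca : c = a
          · subst hca
            rw [if_pos rfl]
            linarith
          · rw [if_neg hca]
            have := hpiSlb s c
            linarith
      · rw [hπ'other s hs c]; exact hpiSlb s c
    have hπ'ub : ∀ s c, π' s c ≤ πub s c := by
      intro s c
      by_cases hs : s = s₀
      · subst hs
        rw [hπ's₀ c]
        by_cases hcb : c = b
        · subst hcb
          rw [if_pos rfl, if_neg hne]
          linarith
        · rw [if_neg hcb]
          by_cases hca : c = a
          · subst hca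
            rw [if_pos rfl]
            have := hpiSub s c
            linarith
          · rw [if_neg hca]
            have := hpiSub s c
            linarith
      · rw [hπ'other s hs c]; exact hpiSub s c
    have hπ'0 : ∀ s c, 0 ≤ π' s c := fun s c => le_trans (hlb0 s c) (hπ'lb s c)
    have hπ'1 : ∀ s, ∑ c, π' s c = 1 := by
      intro s
      by_cases hs : s = s₀
      · subst hs
        rw [Finset.sum_congr rfl fun c _ => hπ's₀ c, Finset.sum_sub_distrib,
          Finset.sum_add_distrib]
        simp only [Finset.sum_ite_eq', Finset.mem_univ, if_true, hpiS1]
        ring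
      · rw [Finset.sum_congr rfl fun c _ => hπ'other s hs c]
        exact hpiS1 s
    obtain ⟨d', hd'0, hd'flow⟩ :=
      exists_visit_nonneg' π' hπ'0 hπ'1 τ hτ0 hτ1 ι (fun s => (hι s).le) γ hγ0 hγ1
    set p' : S → A → ℝ := fun s c => d' s * π' s c with hp'def
    have hsum' : ∀ s, ∑ c, p' s c = d' s := by
      intro s
      simp only [hp'def]
      rw [← Finset.mul_sum, hπ'1, mul_one]
    have hflow' : ∀ s, d' s = (1 - γ) * ι s + γ * ∑ s', ∑ a', p' s' a' * τ s' a' s := by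
      intro s
      simp only [hp'def]
      exact hd'flow s
    have hp'0 : ∀ s c, 0 ≤ p' s c := by
      intro s c; simp only [hp'def]
      exact mul_nonneg (hd'0 s) (hπ'0 s c)
    have hle : DualObj τ r p' ≤ DualObj τ r pStar := by
      refine hDOpt d' p' ⟨⟨hsum', hflow', hp'0⟩, fun s c => ⟨?_, ?_⟩⟩
      · simp only [hp'def]
        exact mul_le_mul_of_nonneg_left (hπ'lb s c) (hd'0 s)
      · simp only [hp'def]
        exact mul_le_mul_of_nonneg_left (hπ'ub s c) (hd'0 s)
    have hfi := flow_identity' τ ι γ d' p' hsum' hflow' v Rb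
    have hinner : ∀ s, ∑ c, p' s c * (Rb s c + γ * ∑ s', τ s c s' * v s' - v s)
        = d' s * ∑ c, π' s c * (qh s c - v s) := by
      intro s
      rw [Finset.mul_sum]
      refine Finset.sum_congr rfl fun c _ => ?_
      simp only [hp'def, hqhdef]; ring
    have hzeroin : ∀ s, ∑ c, piS s c * (qh s c - v s) = 0 := by
      intro s
      have e : ∑ c, piS s c * (qh s c - v s)
          = (∑ c, piS s c * qh s c) - (∑ c, piS s c) * v s := by
        rw [Finset.sum_mul, ← Finset.sum_sub_distrib]
        exact Finset.sum_congr rfl fun c _ => by ring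
      rw [e, ← hvq s, hpiS1]; ring
    have hLHS : ∑ s, ∑ c, p' s c * (Rb s c + γ * ∑ s', τ s c s' * v s' - v s)
        = d' s₀ * (ε * (qh s₀ b - qh s₀ a)) := by
      rw [Finset.sum_congr rfl fun s _ => hinner s]
      rw [Finset.sum_eq_single_of_mem s₀ (Finset.mem_univ _)]
      · congr 1
        have e1 : ∀ c, π' s₀ c * (qh s₀ c - v s₀)
            = piS s₀ c * (qh s₀ c - v s₀) + (if c = b then ε * (qh s₀ c - v s₀) else 0)
              - (if c = a then ε * (qh s₀ c - v s₀) else 0) := by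
          intro c
          rw [hπ's₀ c]
          split_ifs <;> ring
        rw [Finset.sum_congr rfl fun c _ => e1 c, Finset.sum_sub_distrib,
          Finset.sum_add_distrib]
        simp only [Finset.sum_ite_eq', Finset.mem_univ, if_true]
        rw [hzeroin s₀]
        ring
      · intro s _ hs
        rw [Finset.sum_congr rfl fun c _ => by rw [hπ'other s hs c], hzeroin s, mul_zero]
    have hd'pos : 0 < d' s₀ := by
      rw [hd'flow s₀]
      have h2 : 0 ≤ ∑ s', ∑ a', d' s' * π' s' a' * τ s' a' s₀ :=
        Finset.sum_nonneg fun s' _ => Finset.sum_nonneg fun a' _ =>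
          mul_nonneg (mul_nonneg (hd'0 s') (hπ'0 s' a')) (hτ0 s' a' s₀)
      have h3 : 0 < (1 - γ) * ι s₀ := mul_pos (by linarith) (hι s₀)
      nlinarith [mul_nonneg hγ0 h2]
    rw [hLHS] at hfi
    rw [hDualRb p'] at hle
    rw [hI2] at hle
    have hpos : 0 < d' s₀ * (ε * (qh s₀ b - qh s₀ a)) := by
      apply mul_pos hd'pos
      apply mul_pos hε
      linarith
    linarith
  -- Step D : construct multipliers
  set Alb : S → Finset A := fun s => univ.filter (fun a => πlb s a < piS s a) with hAlbdef
  set lam : S → ℝ := fun s =>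
    if h : (Alb s).Nonempty then (Alb s).inf' h (qh s)
    else univ.sup' Finset.univ_nonempty (qh s) with hlamdef
  set rlb : S → A → ℝ := fun s a => max (lam s - qh s a) 0 with hrlbdef
  set rub : S → A → ℝ := fun s a => max (qh s a - lam s) 0 with hrubdef
  have hfact1 : ∀ s a, qh s a < lam s → piS s a = πlb s a := by
    intro s a h
    by_contra hneq
    have hmem : a ∈ Alb s := by
      simp only [hAlbdef, Finset.mem_filter, Finset.mem_univ, true_and]
      exact lt_of_le_of_ne (hpiSlb s a) (fun he => hneq he.symm)
    have hnon : (Alb s).Nonempty := ⟨a, hmem⟩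
    have : lam s ≤ qh s a := by
      simp only [hlamdef]
      rw [dif_pos hnon]
      exact Finset.inf'_le _ hmem
    linarith
  have hfact2 : ∀ s a, lam s < qh s a → piS s a = πub s a := by
    intro s a h
    by_contra hneq
    have hub : piS s a < πub s a := lt_of_le_of_ne (hpiSub s a) hneq
    by_cases hnon : (Alb s).Nonempty
    · obtain ⟨a₀, ha₀, hq₀⟩ := Finset.exists_mem_eq_inf' hnon (qh s)
      have hlama : lam s = qh s a₀ := by
        simp only [hlamdef]; rw [dif_pos hnon]; exact hq₀
      have ha₀' : πlb s a₀ < piS s a₀ := by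
        simp only [hAlbdef, Finset.mem_filter, Finset.mem_univ, true_and] at ha₀
        exact ha₀
      have hcmp := key s a₀ a ha₀' hub
      rw [← hlama] at hcmp
      linarith
    · have : qh s a ≤ lam s := by
        simp only [hlamdef]; rw [dif_neg hnon]
        exact Finset.le_sup' _ (Finset.mem_univ a)
      linarith
  have hqlam : ∀ s a, qh s a + rlb s a - rub s a = lam s := by
    intro s a
    simp only [hrlbdef, hrubdef]
    rcases le_total (qh s a) (lam s) with h | h
    · rw [max_eq_left (by linarith), max_eq_right (by linarith)]; ring
    · rw [max_eq_right (by linarith), max_eq_left (by linarith)]; ring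
  have hrlb0 : ∀ s a, 0 ≤ rlb s a := fun s a => by simp only [hrlbdef]; exact le_max_right _ _
  have hrub0 : ∀ s a, 0 ≤ rub s a := fun s a => by simp only [hrubdef]; exact le_max_right _ _
  have hzero1 : ∀ s, ∑ a, rlb s a * (piS s a - πlb s a) = 0 := by
    intro s
    refine Finset.sum_eq_zero fun a _ => ?_
    rcases lt_or_ge (qh s a) (lam s) with h | h
    · rw [hfact1 s a h]; ring
    · have : rlb s a = 0 := by
        simp only [hrlbdef]; rw [max_eq_right]; linarith
      rw [this, zero_mul]
  have hzero2 : ∀ s, ∑ a, rub s a * (πub s a - piS s a) = 0 := by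
    intro s
    refine Finset.sum_eq_zero fun a _ => ?_
    rcases lt_or_ge (lam s) (qh s a) with h | h
    · rw [hfact2 s a h]; ring
    · have : rub s a = 0 := by
        simp only [hrubdef]; rw [max_eq_right]; linarith
      rw [this, zero_mul]
  have hClb : ∀ s, ∑ b, rlb s b * πlb s b = ∑ b, rlb s b * piS s b := by
    intro s
    have h2 : ∑ a, (rlb s a * piS s a - rlb s a * πlb s a) = 0 := by
      rw [← hzero1 s]
      exact Finset.sum_congr rfl fun a _ => by ring
    rw [Finset.sum_sub_distrib] at h2
    linarith
  have hCub : ∀ s, ∑ b, rub s b * πub s b = ∑ b, rub s b * piS s b := by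
    intro s
    have h2 : ∑ a, (rub s a * πub s a - rub s a * piS s a) = 0 := by
      rw [← hzero2 s]
      exact Finset.sum_congr rfl fun a _ => by ring
    rw [Finset.sum_sub_distrib] at h2
    linarith
  set q : S → A → ℝ := fun s a => ∑ s', τ s a s' *
      (r s a s' + rlb s a - (∑ b, rlb s b * πlb s b) - rub s a + (∑ b, rub s b * πub s b)
        + γ * v s') with hqdef
  have hqrw : ∀ s a, q s a = qh s a + (rlb s a - (∑ b, rlb s b * πlb s b) - rub s a
      + (∑ b, rub s b * πub s b)) := by
    intro s a
    simp only [hqdef, hqhdef]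
    rw [show (∑ s', τ s a s' * (r s a s' + rlb s a - (∑ b, rlb s b * πlb s b) - rub s a
        + (∑ b, rub s b * πub s b) + γ * v s'))
        = ∑ s', τ s a s' * (r s a s' + (rlb s a - (∑ b, rlb s b * πlb s b) - rub s a
        + (∑ b, rub s b * πub s b)) + γ * v s')
      from Finset.sum_congr rfl fun s' _ => by ring]
    rw [expand_row (τ s a) (hτ1 s a)]
    simp only [hRbdef]
    ring
  have hqveq : ∀ s a, q s a = v s := by
    intro s a
    rw [hqrw s a, hClb s, hCub s]
    have h2 : v s = lam s + (∑ b, rub s b * piS s b) - (∑ b, rlb s b * piS s b) := by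
      rw [hvq s]
      have e : ∀ c, piS s c * qh s c
          = piS s c * lam s + rub s c * piS s c - rlb s c * piS s c := by
        intro c
        linear_combination (piS s c) * hqlam s c
      rw [Finset.sum_congr rfl fun c _ => e c, Finset.sum_sub_distrib,
        Finset.sum_add_distrib, ← Finset.sum_mul, hpiS1, one_mul]
    rw [h2]
    have := hqlam s a
    linarith
  have hopt := hPOpt v q rlb rub
    ⟨fun s a => le_of_eq (hqveq s a), fun s a => by simp only [hqdef], hrlb0, hrub0⟩
  have hvobj : ∑ s, ι s * ((1 - γ) * v s) = DualObj τ r pStar := by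
    rw [hI2, Finset.mul_sum]
    exact Finset.sum_congr rfl fun s _ => by ring
  -- Step E : complementary slackness
  set Clb : S → ℝ := fun s => ∑ b, rlbStar s b * πlb s b with hClbdef
  set Cub : S → ℝ := fun s => ∑ b, rubStar s b * πub s b with hCubdef
  set gS : S → A → ℝ := fun s a => Rb s a + (rlbStar s a - Clb s - rubStar s a + Cub s)
    with hgSdef
  have hqStar : ∀ s a, qStar s a = gS s a + γ * ∑ s', τ s a s' * vStar s' := by
    intro s a
    rw [hqeq s a]
    rw [show (∑ s', τ s a s' * (r s a s' + rlbStar s a - Clb s - rubStar s a + Cub s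
        + γ * vStar s'))
        = ∑ s', τ s a s' * (r s a s'
          + (rlbStar s a - Clb s - rubStar s a + Cub s) + γ * vStar s')
      from Finset.sum_congr rfl fun s' _ => by ring]
    rw [expand_row (τ s a) (hτ1 s a)]
  have hfi2 := flow_identity' τ ι γ dStar pStar hpsum hpflow vStar gS
  have hL : ∑ s, ∑ a, pStar s a * (gS s a + γ * ∑ s', τ s a s' * vStar s' - vStar s)
      = ∑ s, ∑ a, pStar s a * (qStar s a - vStar s) :=
    Finset.sum_congr rfl fun s _ => Finset.sum_congr rfl fun a _ => by rw [hqStar s a]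
  have hG : ∑ s, ∑ a, pStar s a * gS s a
      = DualObj τ r pStar + ∑ s, ∑ a, (rlbStar s a * (pStar s a - dStar s * πlb s a)
        + rubStar s a * (dStar s * πub s a - pStar s a)) := by
    rw [hDualRb pStar, ← Finset.sum_add_distrib]
    refine Finset.sum_congr rfl fun s _ => ?_
    have hDa : ∀ a, pStar s a * gS s a
        = pStar s a * Rb s a + (rlbStar s a * (pStar s a - dStar s * πlb s a)
          + rubStar s a * (dStar s * πub s a - pStar s a))
          + (dStar s * (rlbStar s a * πlb s a) - dStar s * (rubStar s a * πub s a)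
             + (Cub s - Clb s) * pStar s a) := by
      intro a; simp only [hgSdef]; ring
    rw [Finset.sum_congr rfl fun a _ => hDa a, Finset.sum_add_distrib,
      Finset.sum_add_distrib]
    have hextra : ∑ a, (dStar s * (rlbStar s a * πlb s a) - dStar s * (rubStar s a * πub s a)
        + (Cub s - Clb s) * pStar s a) = 0 := by
      rw [Finset.sum_add_distrib, Finset.sum_sub_distrib, ← Finset.mul_sum, ← Finset.mul_sum,
        ← Finset.mul_sum, hpsum]
      simp only [hClbdef, hCubdef]
      ring
    rw [hextra, add_zero]
  rw [hL, hG] at hfi2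
  have hWneg : ∑ s, ∑ a, pStar s a * (qStar s a - vStar s)
      = -∑ s, ∑ a, pStar s a * (vStar s - qStar s a) := by
    rw [← Finset.sum_neg_distrib]
    refine Finset.sum_congr rfl fun s _ => ?_
    rw [← Finset.sum_neg_distrib]
    exact Finset.sum_congr rfl fun a _ => by ring
  have hslack_nonneg : ∀ s a, 0 ≤ rlbStar s a * (pStar s a - dStar s * πlb s a)
      + rubStar s a * (dStar s * πub s a - pStar s a) := by
    intro s a
    have h1 := (hbounds s a).1
    have h2 := (hbounds s a).2
    have := mul_nonneg (hrlbS0 s a) (sub_nonneg.mpr h1)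
    have := mul_nonneg (hrubS0 s a) (sub_nonneg.mpr h2)
    linarith
  have hW_nonneg : ∀ s a, 0 ≤ pStar s a * (vStar s - qStar s a) := fun s a =>
    mul_nonneg (hp0 s a) (sub_nonneg.mpr (hqv s a))
  have hvStarobj : ∑ s, ι s * ((1 - γ) * vStar s) = (1 - γ) * ∑ s, ι s * vStar s := by
    rw [Finset.mul_sum]
    exact Finset.sum_congr rfl fun s _ => by ring
  have hSnn : 0 ≤ ∑ s, ∑ a, (rlbStar s a * (pStar s a - dStar s * πlb s a)
      + rubStar s a * (dStar s * πub s a - pStar s a)) :=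
    Finset.sum_nonneg fun s _ => Finset.sum_nonneg fun a _ => hslack_nonneg s a
  have hWnn : 0 ≤ ∑ s, ∑ a, pStar s a * (vStar s - qStar s a) :=
    Finset.sum_nonneg fun s _ => Finset.sum_nonneg fun a _ => hW_nonneg s a
  have hchain : ∑ s, ι s * ((1 - γ) * vStar s) ≤ DualObj τ r pStar := by
    calc ∑ s, ι s * ((1 - γ) * vStar s) ≤ ∑ s, ι s * ((1 - γ) * v s) := hopt
      _ = DualObj τ r pStar := hvobj
  have hS0 : ∑ s, ∑ a, (rlbStar s a * (pStar s a - dStar s * πlb s a)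
      + rubStar s a * (dStar s * πub s a - pStar s a)) = 0 := by
    rw [hWneg] at hfi2
    rw [hvStarobj] at hchain
    linarith
  have hterm0 : ∀ s a, rlbStar s a * (pStar s a - dStar s * πlb s a)
      + rubStar s a * (dStar s * πub s a - pStar s a) = 0 := by
    have h1 := (Finset.sum_eq_zero_iff_of_nonneg
      (fun s _ => Finset.sum_nonneg fun a _ => hslack_nonneg s a)).mp hS0
    intro s a
    exact (Finset.sum_eq_zero_iff_of_nonneg (fun a _ => hslack_nonneg s a)).mp
      (h1 s (Finset.mem_univ s)) a (Finset.mem_univ a)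
  constructor
  · intro s a h
    have hgap : 0 < pStar s a - dStar s * πlb s a := by
      have h2 := (lt_div_iff₀ (hd0 s)).mp h
      have e : dStar s * πlb s a = πlb s a * dStar s := mul_comm _ _
      linarith
    have h1 := mul_nonneg (hrlbS0 s a) hgap.le
    have h2 := mul_nonneg (hrubS0 s a) (sub_nonneg.mpr (hbounds s a).2)
    have h3 := hterm0 s a
    have h4 : rlbStar s a * (pStar s a - dStar s * πlb s a) = 0 := by linarith
    rcases mul_eq_zero.mp h4 with h5 | h5
    · exact h5
    · exact absurd h5 hgap.ne'
  · intro s a h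
    have hgap : 0 < dStar s * πub s a - pStar s a := by
      have h2 := (div_lt_iff₀ (hd0 s)).mp h
      have e : dStar s * πub s a = πub s a * dStar s := mul_comm _ _
      linarith
    have h1 := mul_nonneg (hrubS0 s a) hgap.le
    have h2 := mul_nonneg (hrlbS0 s a) (sub_nonneg.mpr (hbounds s a).1)
    have h3 := hterm0 s a
    have h4 : rubStar s a * (dStar s * πub s a - pStar s a) = 0 := by linarith
    rcases mul_eq_zero.mp h4 with h5 | h5
    · exact h5
    · exact absurd h5 hgap.ne'
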